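/- For every finite MDP D = (S, s_init, A, δ, w) with strictly positive integer weights, every target set T ⊆ S and all thresholds ℓ₁, ℓ₂ ∈ ℕ: if there exists a strategy σ such that every run consistent with σ satisfies TS^T(ρ) ≤ ℓ₁ and E^σ(TS^T) ≤ ℓ₂, then there exists a pure strategy σ' whose choice after a history s₁a₁…s_n depends only on the pair (s_n, Σ_{i=1}^{n-1} w(a_i)) — a pure finite-memory strategy, since the accumulated weight stays at most ℓ₁ along runs consistent with σ' — such that every run consistent with σ' satisfies TS^T(ρ) ≤ ℓ₁ and E^{σ'}(TS^T) ≤ ℓ₂. -/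

import Mathlib

open scoped NNReal ENNReal

/-- A finite Markov decision process: finite state space `S`, finite action space `A`,
an initial state, a nonempty set of available actions in each state, and a probabilistic
transition function (a probability distribution over successors for each available action). -/
structure MDP (S A : Type) [Fintype S] [Fintype A] where
  init : S
  avail : S → Finset A
  avail_nonempty : ∀ s, (avail s).Nonempty
  tr : S → A → S → ℝ≥0
  tr_sum : ∀ s a, a ∈ avail s → ∑ s' : S, tr s a s' = 1

section Core

variable {S A : Type} [Fintype S] [Fintype A]

/-- A history `s₁ a₁ s₂ a₂ … a_{n-1} s_n` (with `s₁ = init`) is encoded as the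
list of steps `[(a₁, s₂), …, (a_{n-1}, s_n)]`. -/
def lastState (M : MDP S A) (h : List (A × S)) : S :=
  (h.getLast?).elim M.init Prod.snd

/-- A (randomized, history-dependent) strategy: to every history it assigns a
probability distribution over actions. -/
abbrev Strat (S A : Type) := List (A × S) → A → ℝ≥0

/-- The distributions prescribed by a strategy are supported on available actions and
sum up to one. -/
def IsStrategy (M : MDP S A) (σ : Strat S A) : Prop :=
  ∀ h : List (A × S),
    (∀ a, a ∉ M.avail (lastState M h) → σ h a = 0) ∧ ∑ a : A, σ h a = 1

/-- A strategy is pure if it always prescribes a Dirac distribution. -/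
def IsPure (σ : Strat S A) : Prop := ∀ h, ∃ a, σ h a = 1

/-- A strategy is memoryless if its choice only depends on the last state of the history. -/
def IsMemoryless (M : MDP S A) (σ : Strat S A) : Prop :=
  ∀ h h' : List (A × S), lastState M h = lastState M h' → σ h = σ h'

/-- Probability of traversing exactly the steps of the second list, after having already
traversed the history `pre`, when playing strategy `σ`:
the product `∏ σ(prefix)(aᵢ) · δ(sᵢ, aᵢ)(sᵢ₊₁)`. -/
def probFrom (M : MDP S A) (σ : Strat S A) : List (A × S) → List (A × S) → ℝ≥0
  | _, [] => 1
  | pre, (a, s') :: rest =>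
      σ pre a * M.tr (lastState M pre) a s' * probFrom M σ (pre ++ [(a, s')]) rest

/-- Probability of the cylinder of a history under strategy `σ`. -/
def probHist (M : MDP S A) (σ : Strat S A) (h : List (A × S)) : ℝ≥0 :=
  probFrom M σ [] h

/-- The sequence of states `s₁ s₂ … s_n` of a history. -/
def stateSeq (M : MDP S A) (h : List (A × S)) : List S :=
  M.init :: h.map Prod.snd

/-- The history visits the target set `T` exactly at its last state (first visit). -/
def Hits (M : MDP S A) (T : Finset S) (h : List (A × S)) : Prop :=
  (stateSeq M h).getLast (by simp [stateSeq]) ∈ T ∧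
    ∀ s ∈ (stateSeq M h).dropLast, s ∉ T

/-- Accumulated weight (truncated sum) along a history. -/
def tsHist (w : A → ℕ) (h : List (A × S)) : ℕ := (h.map fun p => w p.1).sum

/-- `P^σ ( TS^T ≤ ℓ )`: since all weights are strictly positive, the event
`TS^T ≤ ℓ` is the disjoint union of the cylinders of the histories that hit `T`
at their last state with accumulated weight at most `ℓ`. -/
noncomputable def probTSLe (M : MDP S A) (σ : Strat S A) (w : A → ℕ) (T : Finset S)
    (ℓ : ℕ) : ℝ≥0∞ :=
  ∑' h : {h : List (A × S) // Hits M T h ∧ tsHist w h ≤ ℓ}, (probHist M σ h.1 : ℝ≥0∞)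

/-- `P^σ ( TS^T = ∞ )`: the probability of never reaching `T`. -/
noncomputable def probNoReach (M : MDP S A) (σ : Strat S A) (T : Finset S) : ℝ≥0∞ :=
  1 - ∑' h : {h : List (A × S) // Hits M T h}, (probHist M σ h.1 : ℝ≥0∞)

/-- `E^σ ( TS^T )`, valued in `[0, ∞]`: the truncated sum is determined at the first
visit of `T`, and takes value `∞` on the (measurable) set of runs never reaching `T`. -/
noncomputable def expTS (M : MDP S A) (σ : Strat S A) (w : A → ℕ) (T : Finset S) : ℝ≥0∞ :=
  (∑' h : {h : List (A × S) // Hits M T h},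
      (probHist M σ h.1 : ℝ≥0∞) * (tsHist w h.1 : ℝ≥0∞))
    + probNoReach M σ T * ⊤

/-- A run is encoded as the infinite sequence of its steps `(aᵢ, sᵢ₊₁)`;
`stateAt M ρ n` is the `(n+1)`-st state `s_{n+1}` of the run (`s₁ = init`). -/
def stateAt (M : MDP S A) (ρ : ℕ → A × S) : ℕ → S
  | 0 => M.init
  | n + 1 => (ρ n).2

/-- The run is consistent with strategy `σ`: every step uses an available action, chosen
with positive probability by `σ`, and leads to a successor of positive transition
probability. -/
def Consistent (M : MDP S A) (σ : Strat S A) (ρ : ℕ → A × S) : Prop :=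
  ∀ n : ℕ, (ρ n).1 ∈ M.avail (stateAt M ρ n) ∧
    0 < σ (List.ofFn fun i : Fin n => ρ i) (ρ n).1 ∧
    0 < M.tr (stateAt M ρ n) (ρ n).1 (ρ n).2

open Classical in
/-- Truncated sum `TS^T` of a run: the accumulated weight up to the first visit of `T`,
and `∞` if `T` is never visited. -/
noncomputable def tsRun (M : MDP S A) (w : A → ℕ) (T : Finset S)
    (ρ : ℕ → A × S) : ℝ≥0∞ :=
  if h : ∃ n, stateAt M ρ n ∈ T then
    ((∑ i ∈ Finset.range (Nat.find h), w (ρ i).1 : ℕ) : ℝ≥0∞)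
  else ⊤

end Core

section Aux
open Classical

variable {S A : Type} [Fintype S] [Fintype A]

/-- Candidate actions in state `s` with remaining budget `b`. -/
noncomputable def cand (M : MDP S A) (w : A → ℕ) (b : ℕ) (s : S) : Finset A :=
  (M.avail s).filter fun a => 1 ≤ w a ∧ w a ≤ b

/-- Optimal expected truncated sum with remaining budget `b`, `⊤` if the worst case
cannot be guaranteed. -/
noncomputable def val (M : MDP S A) (w : A → ℕ) (T : Finset S) (b : ℕ) (s : S) : ℝ≥0∞ :=
  if s ∈ T then 0 else
    (cand M w b s).attach.inf fun a =>
      (w a.1 : ℝ≥0∞) + ∑ s' : S, (M.tr s a.1 s' : ℝ≥0∞) * val M w T (b - w a.1) s'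
termination_by b
decreasing_by
  have h := a.2
  simp only [cand, Finset.mem_filter] at h
  omega

noncomputable def Qv (M : MDP S A) (w : A → ℕ) (T : Finset S) (b : ℕ) (s : S) (a : A) :
    ℝ≥0∞ :=
  (w a : ℝ≥0∞) + ∑ s' : S, (M.tr s a s' : ℝ≥0∞) * val M w T (b - w a) s'

lemma val_eq (M : MDP S A) (w : A → ℕ) (T : Finset S) (b : ℕ) (s : S) :
    val M w T b s = if s ∈ T then 0 else (cand M w b s).inf (Qv M w T b s) := by
  rw [val]
  refine if_congr Iff.rfl rfl ?_
  exact Finset.inf_attach (cand M w b s) (Qv M w T b s)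

lemma val_of_mem {M : MDP S A} {w : A → ℕ} {T : Finset S} {b : ℕ} {s : S} (hs : s ∈ T) :
    val M w T b s = 0 := by rw [val_eq, if_pos hs]

lemma val_le_Qv {M : MDP S A} {w : A → ℕ} {T : Finset S} {b : ℕ} {s : S}
    (hs : s ∉ T) {a : A} (ha : a ∈ cand M w b s) :
    val M w T b s ≤ Qv M w T b s a := by
  rw [val_eq, if_neg hs]; exact Finset.inf_le ha

lemma exists_min {M : MDP S A} {w : A → ℕ} {T : Finset S} {b : ℕ} {s : S}
    (hs : s ∉ T) (hv : val M w T b s ≠ ⊤) :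
    ∃ a ∈ cand M w b s, Qv M w T b s a = val M w T b s := by
  rcases (cand M w b s).eq_empty_or_nonempty with he | hne
  · rw [val_eq, if_neg hs, he] at hv
    simp at hv
  · obtain ⟨a, ha, hq⟩ := Finset.exists_mem_eq_inf _ hne (Qv M w T b s)
    exact ⟨a, ha, by rw [val_eq, if_neg hs, hq]⟩

noncomputable def act (M : MDP S A) (w : A → ℕ) (T : Finset S) (b : ℕ) (s : S) : A :=
  if h : ∃ a ∈ cand M w b s, Qv M w T b s a = val M w T b s then h.choose
  else (M.avail_nonempty s).choose

lemma act_avail (M : MDP S A) (w : A → ℕ) (T : Finset S) (b : ℕ) (s : S) :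
    act M w T b s ∈ M.avail s := by
  unfold act
  split
  · next h => exact Finset.filter_subset _ _ h.choose_spec.1
  · exact (M.avail_nonempty s).choose_spec

lemma act_spec {M : MDP S A} {w : A → ℕ} {T : Finset S} {b : ℕ} {s : S}
    (hs : s ∉ T) (hv : val M w T b s ≠ ⊤) :
    act M w T b s ∈ cand M w b s ∧ Qv M w T b s (act M w T b s) = val M w T b s := by
  unfold act
  split
  · next h => exact ⟨h.choose_spec.1, h.choose_spec.2⟩
  · next h => exact absurd (exists_min hs hv) h

/-- The pure finite-memory strategy: play the optimal action for the current
state and accumulated weight. -/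
noncomputable def pstrat (M : MDP S A) (w : A → ℕ) (T : Finset S) (ℓ₁ : ℕ) : Strat S A :=
  fun h a => if a = act M w T (ℓ₁ - tsHist w h) (lastState M h) then 1 else 0

end Aux
set_option linter.unusedSectionVars false
section Aux2
open Classical

variable {S A : Type} [Fintype S] [Fintype A]

lemma lastState_nil (M : MDP S A) : lastState M [] = M.init := rfl

lemma lastState_concat (M : MDP S A) (h : List (A × S)) (p : A × S) :
    lastState M (h ++ [p]) = p.2 := by
  simp [lastState]

lemma tsHist_nil (w : A → ℕ) : tsHist w ([] : List (A × S)) = 0 := rfl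

lemma tsHist_concat (w : A → ℕ) (h : List (A × S)) (p : A × S) :
    tsHist w (h ++ [p]) = tsHist w h + w p.1 := by
  simp [tsHist]

lemma probFrom_nil (M : MDP S A) (σ : Strat S A) (pre : List (A × S)) :
    probFrom M σ pre [] = 1 := rfl

lemma probFrom_cons (M : MDP S A) (σ : Strat S A) (pre : List (A × S)) (p : A × S)
    (rest : List (A × S)) :
    probFrom M σ pre (p :: rest) =
      σ pre p.1 * M.tr (lastState M pre) p.1 p.2 * probFrom M σ (pre ++ [p]) rest := by
  obtain ⟨a, s'⟩ := p; rfl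

lemma probFrom_concat (M : MDP S A) (σ : Strat S A) (rest : List (A × S)) :
    ∀ pre : List (A × S), ∀ p : A × S,
      probFrom M σ pre (rest ++ [p]) =
        probFrom M σ pre rest *
          (σ (pre ++ rest) p.1 * M.tr (lastState M (pre ++ rest)) p.1 p.2) := by
  induction rest with
  | nil =>
      intro pre p
      simp only [List.nil_append, List.append_nil]
      rw [probFrom_cons]
      simp [probFrom_nil]
  | cons q t ih =>
      intro pre p
      rw [List.cons_append, probFrom_cons, probFrom_cons, ih (pre ++ [q]) p]
      simp only [List.append_assoc, List.singleton_append]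
      ring

lemma probHist_concat (M : MDP S A) (σ : Strat S A) (h : List (A × S)) (p : A × S) :
    probHist M σ (h ++ [p]) =
      probHist M σ h * (σ h p.1 * M.tr (lastState M h) p.1 p.2) := by
  simpa [probHist] using probFrom_concat M σ h [] p

/-- Relative first-hit predicate for the continuation of a history. -/
def RHit (T : Finset S) : List (A × S) → Prop
  | [] => False
  | (_, s) :: rest => (s ∈ T ∧ rest = []) ∨ (s ∉ T ∧ RHit T rest)

lemma RHit_nil (T : Finset S) : ¬ RHit T ([] : List (A × S)) := fun h => h

lemma RHit_cons_mem {T : Finset S} {s : S} (hs : s ∈ T) (a : A) (rest : List (A × S)) :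
    RHit T ((a, s) :: rest) ↔ rest = [] := by
  constructor
  · rintro (⟨-, h⟩ | ⟨hn, -⟩)
    · exact h
    · exact absurd hs hn
  · rintro rfl; exact Or.inl ⟨hs, rfl⟩

lemma RHit_cons_not_mem {T : Finset S} {s : S} (hs : s ∉ T) (a : A) (rest : List (A × S)) :
    RHit T ((a, s) :: rest) ↔ RHit T rest := by
  constructor
  · rintro (⟨hm, -⟩ | ⟨-, h⟩)
    · exact absurd hm hs
    · exact h
  · exact fun h => Or.inr ⟨hs, h⟩

/-- Probability of hitting `T` in the future, after history `h`. -/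
noncomputable def RP (M : MDP S A) (T : Finset S) (σ : Strat S A) (h : List (A × S)) :
    ℝ≥0∞ :=
  ∑' rest : List (A × S), if RHit T rest then (probFrom M σ h rest : ℝ≥0∞) else 0

/-- Expected weight accumulated until hitting `T` in the future, after history `h`. -/
noncomputable def RE (M : MDP S A) (w : A → ℕ) (T : Finset S) (σ : Strat S A)
    (h : List (A × S)) : ℝ≥0∞ :=
  ∑' rest : List (A × S),
    if RHit T rest then (probFrom M σ h rest : ℝ≥0∞) * (tsHist w rest : ℝ≥0∞) else 0

lemma tsum_list_cons (f : List (A × S) → ℝ≥0∞) (h0 : f [] = 0) :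
    ∑' l : List (A × S), f l = ∑ p : A × S, ∑' l : List (A × S), f (p :: l) := by
  have hinj : Function.Injective (fun q : (A × S) × List (A × S) => q.1 :: q.2) := by
    rintro ⟨p, l⟩ ⟨p', l'⟩ hpl
    simp only [List.cons.injEq] at hpl
    simp [hpl.1, hpl.2]
  have hsupp : Function.support f ⊆
      Set.range (fun q : (A × S) × List (A × S) => q.1 :: q.2) := by
    intro l hl
    cases l with
    | nil => exact absurd h0 hl
    | cons p t => exact ⟨(p, t), rfl⟩
  rw [← hinj.tsum_eq hsupp,
    ENNReal.tsum_prod (f := fun (p : A × S) (l : List (A × S)) => f (p :: l)), tsum_fintype]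

lemma RP_decomp (M : MDP S A) (T : Finset S) (σ : Strat S A) (h : List (A × S)) :
    RP M T σ h = ∑ p : A × S,
      (σ h p.1 : ℝ≥0∞) * (M.tr (lastState M h) p.1 p.2 : ℝ≥0∞) *
        (if p.2 ∈ T then 1 else RP M T σ (h ++ [p])) := by
  rw [RP, tsum_list_cons _ (by simp [RHit_nil])]
  refine Finset.sum_congr rfl fun p _ => ?_
  obtain ⟨a, s'⟩ := p
  by_cases hs : s' ∈ T
  · simp only [hs, if_true]
    have heq : ∀ l : List (A × S),
        (if RHit T ((a, s') :: l) then (probFrom M σ h ((a, s') :: l) : ℝ≥0∞) else 0) =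
          if l = [] then (σ h a : ℝ≥0∞) * (M.tr (lastState M h) a s' : ℝ≥0∞) else 0 := by
      intro l
      rw [RHit_cons_mem hs]
      by_cases hl : l = []
      · subst hl
        rw [if_pos rfl, if_pos rfl, probFrom_cons, probFrom_nil]
        push_cast
        ring
      · rw [if_neg hl, if_neg hl]
    rw [tsum_congr heq, tsum_ite_eq]
    simp
  · simp only [hs, if_false]
    have heq : ∀ l : List (A × S),
        (if RHit T ((a, s') :: l) then (probFrom M σ h ((a, s') :: l) : ℝ≥0∞) else 0) =
          (σ h a : ℝ≥0∞) * (M.tr (lastState M h) a s' : ℝ≥0∞) *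
            (if RHit T l then (probFrom M σ (h ++ [(a, s')]) l : ℝ≥0∞) else 0) := by
      intro l
      rw [RHit_cons_not_mem hs]
      by_cases hl : RHit T l
      · rw [if_pos hl, if_pos hl, probFrom_cons]
        push_cast
        ring
      · rw [if_neg hl, if_neg hl, mul_zero]
    rw [tsum_congr heq]
    exact ENNReal.tsum_mul_left

lemma RE_decomp (M : MDP S A) (w : A → ℕ) (T : Finset S) (σ : Strat S A)
    (h : List (A × S)) :
    RE M w T σ h = ∑ p : A × S,
      (σ h p.1 : ℝ≥0∞) * (M.tr (lastState M h) p.1 p.2 : ℝ≥0∞) *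
        (if p.2 ∈ T then (w p.1 : ℝ≥0∞)
         else (w p.1 : ℝ≥0∞) * RP M T σ (h ++ [p]) + RE M w T σ (h ++ [p])) := by
  rw [RE, tsum_list_cons _ (by simp [RHit_nil])]
  refine Finset.sum_congr rfl fun p _ => ?_
  obtain ⟨a, s'⟩ := p
  have hts : ∀ l : List (A × S), (tsHist w ((a, s') :: l) : ℝ≥0∞) =
      (w a : ℝ≥0∞) + (tsHist w l : ℝ≥0∞) := by
    intro l; simp [tsHist]
  by_cases hs : s' ∈ T
  · simp only [hs, if_true]
    have heq : ∀ l : List (A × S),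
        (if RHit T ((a, s') :: l) then
          (probFrom M σ h ((a, s') :: l) : ℝ≥0∞) * (tsHist w ((a, s') :: l) : ℝ≥0∞) else 0) =
          if l = [] then (σ h a : ℝ≥0∞) * (M.tr (lastState M h) a s' : ℝ≥0∞) * (w a : ℝ≥0∞)
          else 0 := by
      intro l
      rw [RHit_cons_mem hs]
      by_cases hl : l = []
      · subst hl
        rw [if_pos rfl, if_pos rfl, probFrom_cons, probFrom_nil, hts]
        simp [tsHist]
      · rw [if_neg hl, if_neg hl]
    rw [tsum_congr heq, tsum_ite_eq]
  · simp only [hs, if_false]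
    have heq : ∀ l : List (A × S),
        (if RHit T ((a, s') :: l) then
          (probFrom M σ h ((a, s') :: l) : ℝ≥0∞) * (tsHist w ((a, s') :: l) : ℝ≥0∞) else 0) =
          (σ h a : ℝ≥0∞) * (M.tr (lastState M h) a s' : ℝ≥0∞) *
            ((w a : ℝ≥0∞) *
              (if RHit T l then (probFrom M σ (h ++ [(a, s')]) l : ℝ≥0∞) else 0)
            + (if RHit T l then
                (probFrom M σ (h ++ [(a, s')]) l : ℝ≥0∞) * (tsHist w l : ℝ≥0∞) else 0)) := by
      intro l
      rw [RHit_cons_not_mem hs]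
      by_cases hl : RHit T l
      · rw [if_pos hl, if_pos hl, if_pos hl, probFrom_cons, hts]
        push_cast
        ring
      · rw [if_neg hl, if_neg hl, if_neg hl]
        simp
    rw [tsum_congr heq, ENNReal.tsum_mul_left, ENNReal.tsum_add, ENNReal.tsum_mul_left]
    rfl

end Aux2
section Aux3
open Classical

set_option linter.unusedSectionVars false

variable {S A : Type} [Fintype S] [Fintype A]

lemma tr_sum_ennreal (M : MDP S A) {s : S} {a : A} (ha : a ∈ M.avail s) :
    ∑ s' : S, (M.tr s a s' : ℝ≥0∞) = 1 := by
  rw [← ENNReal.coe_finset_sum, M.tr_sum s a ha, ENNReal.coe_one]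

lemma strat_sum_ennreal {M : MDP S A} {τ : Strat S A} (hτ : IsStrategy M τ)
    (h : List (A × S)) : ∑ a : A, (τ h a : ℝ≥0∞) = 1 := by
  rw [← ENNReal.coe_finset_sum, (hτ h).2, ENNReal.coe_one]

lemma sum_pair_one {M : MDP S A} {τ : Strat S A} (hτ : IsStrategy M τ)
    (h : List (A × S)) :
    ∑ p : A × S, (τ h p.1 : ℝ≥0∞) * (M.tr (lastState M h) p.1 p.2 : ℝ≥0∞) = 1 := by
  rw [Fintype.sum_prod_type]
  have key : ∀ a : A,
      ∑ s' : S, (τ h a : ℝ≥0∞) * (M.tr (lastState M h) a s' : ℝ≥0∞) = (τ h a : ℝ≥0∞) := by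
    intro a
    by_cases ha : a ∈ M.avail (lastState M h)
    · rw [← Finset.mul_sum, tr_sum_ennreal M ha, mul_one]
    · rw [(hτ h).1 a ha]; simp
  rw [Finset.sum_congr rfl fun a _ => key a, strat_sum_ennreal hτ]

lemma exists_pos_step {M : MDP S A} {τ : Strat S A} (hτ : IsStrategy M τ)
    (h : List (A × S)) :
    ∃ p : A × S, τ h p.1 ≠ 0 ∧ p.1 ∈ M.avail (lastState M h) ∧
      M.tr (lastState M h) p.1 p.2 ≠ 0 := by
  have h2 := (hτ h).2
  have ha : ∃ a, τ h a ≠ 0 := by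
    by_contra hc
    push_neg at hc
    simp only [hc, Finset.sum_const_zero] at h2
    exact zero_ne_one h2
  obtain ⟨a, ha⟩ := ha
  have hav : a ∈ M.avail (lastState M h) := by
    by_contra hna
    exact ha ((hτ h).1 a hna)
  have htr := M.tr_sum (lastState M h) a hav
  have hs : ∃ s', M.tr (lastState M h) a s' ≠ 0 := by
    by_contra hc
    push_neg at hc
    simp only [hc, Finset.sum_const_zero] at htr
    exact zero_ne_one htr
  obtain ⟨s', hs'⟩ := hs
  exact ⟨(a, s'), ha, hav, hs'⟩

lemma val_succ_ne_top {M : MDP S A} {w : A → ℕ} {T : Finset S} {b : ℕ} {s : S} {a : A}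
    (hQ : Qv M w T b s a ≠ ⊤) {s' : S} (htr : M.tr s a s' ≠ 0) :
    val M w T (b - w a) s' ≠ ⊤ := by
  intro hcon
  apply hQ
  rw [Qv]
  have hterm : (M.tr s a s' : ℝ≥0∞) * val M w T (b - w a) s' = ⊤ := by
    rw [hcon]
    exact ENNReal.mul_top (by exact_mod_cast htr)
  have hsum : ∑ s'' : S, (M.tr s a s'' : ℝ≥0∞) * val M w T (b - w a) s'' = ⊤ :=
    ENNReal.sum_eq_top.mpr ⟨s', Finset.mem_univ s', hterm⟩
  rw [hsum]
  exact add_top _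

lemma sum_tr_Qv (M : MDP S A) (w : A → ℕ) (T : Finset S) {s : S} {a : A}
    (hav : a ∈ M.avail s) (b : ℕ) :
    ∑ s' : S, (M.tr s a s' : ℝ≥0∞) * ((w a : ℝ≥0∞) + val M w T (b - w a) s')
      = Qv M w T b s a := by
  rw [Qv]
  simp_rw [mul_add]
  rw [Finset.sum_add_distrib, ← Finset.sum_mul, tr_sum_ennreal M hav, one_mul]

lemma isStrategy_pstrat (M : MDP S A) (w : A → ℕ) (T : Finset S) (ℓ₁ : ℕ) :
    IsStrategy M (pstrat M w T ℓ₁) := by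
  intro h
  constructor
  · intro a ha
    have hne : a ≠ act M w T (ℓ₁ - tsHist w h) (lastState M h) := by
      rintro rfl
      exact ha (act_avail M w T _ _)
    simp [pstrat, hne]
  · simp [pstrat]

lemma UB (M : MDP S A) (w : A → ℕ) (hw : ∀ a, 1 ≤ w a) (T : Finset S) (ℓ₁ : ℕ) :
    ∀ n : ℕ, ∀ h : List (A × S),
      lastState M h ∉ T → tsHist w h ≤ ℓ₁ →
      val M w T (ℓ₁ - tsHist w h) (lastState M h) ≠ ⊤ →
      ℓ₁ + 1 - tsHist w h ≤ n →
      RP M T (pstrat M w T ℓ₁) h = 1 ∧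
        RE M w T (pstrat M w T ℓ₁) h ≤ val M w T (ℓ₁ - tsHist w h) (lastState M h) := by
  intro n
  induction n with
  | zero => intro h _ hts _ hn; omega
  | succ n ih =>
    intro h hs hts hv hn
    obtain ⟨hacand, hQ⟩ := act_spec hs hv
    set σ' := pstrat M w T ℓ₁ with hσ'
    set s := lastState M h with hsdef
    set b := ℓ₁ - tsHist w h with hbdef
    set a0 := act M w T b s with ha0
    have hcand := hacand
    rw [cand, Finset.mem_filter] at hcand
    have hav := hcand.1
    have hw1 := hcand.2.1
    have hwb := hcand.2.2
    have hps : ∀ a, σ' h a = if a = a0 then 1 else 0 := fun a => rfl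
    -- facts about successors
    have hQne : Qv M w T b s a0 ≠ ⊤ := by rw [hQ]; exact hv
    have hsub : ∀ p : A × S, ℓ₁ - tsHist w (h ++ [p]) = b - w p.1 := by
      intro p; rw [tsHist_concat]; omega
    have hih : ∀ s' : S, M.tr s a0 s' ≠ 0 → s' ∉ T →
        RP M T σ' (h ++ [(a0, s')]) = 1 ∧
          RE M w T σ' (h ++ [(a0, s')]) ≤ val M w T (b - w a0) s' := by
      intro s' htr hsT
      have harith : ℓ₁ - (tsHist w h + w a0) = b - w a0 := by omega
      have h1 := ih (h ++ [(a0, s')])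
      rw [lastState_concat, tsHist_concat] at h1
      simp only at h1
      rw [harith] at h1
      exact h1 hsT (by omega) (val_succ_ne_top hQne htr) (by have := hw a0; omega)
    constructor
    · rw [RP_decomp, Fintype.sum_prod_type]
      have hz : ∀ a : A, a ≠ a0 → (∑ s' : S, (σ' h a : ℝ≥0∞) *
          (M.tr (lastState M h) a s' : ℝ≥0∞) *
          (if s' ∈ T then 1 else RP M T σ' (h ++ [(a, s')])) ) = 0 := by
        intro a hne
        have : σ' h a = 0 := by rw [hps a, if_neg hne]
        simp [this]
      rw [Fintype.sum_eq_single a0 hz]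
      have h1 : (σ' h a0 : ℝ≥0∞) = 1 := by rw [hps a0, if_pos rfl]; rfl
      have hterm : ∀ s' : S, (σ' h a0 : ℝ≥0∞) * (M.tr (lastState M h) a0 s' : ℝ≥0∞) *
          (if s' ∈ T then 1 else RP M T σ' (h ++ [(a0, s')]))
          = (M.tr s a0 s' : ℝ≥0∞) := by
        intro s'
        rw [h1, one_mul, ← hsdef]
        by_cases htr : M.tr s a0 s' = 0
        · simp [htr]
        · by_cases hsT : s' ∈ T
          · rw [if_pos hsT, mul_one]
          · rw [if_neg hsT, (hih s' htr hsT).1, mul_one]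
      rw [Finset.sum_congr rfl fun s' _ => hterm s', tr_sum_ennreal M hav]
    · rw [RE_decomp, Fintype.sum_prod_type]
      have hz : ∀ a : A, a ≠ a0 → (∑ s' : S, (σ' h a : ℝ≥0∞) *
          (M.tr (lastState M h) a s' : ℝ≥0∞) *
          (if s' ∈ T then (w a : ℝ≥0∞)
           else (w a : ℝ≥0∞) * RP M T σ' (h ++ [(a, s')]) + RE M w T σ' (h ++ [(a, s')]))) = 0 := by
        intro a hne
        have : σ' h a = 0 := by rw [hps a, if_neg hne]
        simp [this]
      rw [Fintype.sum_eq_single a0 hz]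
      have h1 : (σ' h a0 : ℝ≥0∞) = 1 := by rw [hps a0, if_pos rfl]; rfl
      calc (∑ s' : S, (σ' h a0 : ℝ≥0∞) * (M.tr (lastState M h) a0 s' : ℝ≥0∞) *
              (if s' ∈ T then (w a0 : ℝ≥0∞)
               else (w a0 : ℝ≥0∞) * RP M T σ' (h ++ [(a0, s')]) + RE M w T σ' (h ++ [(a0, s')])))
          ≤ ∑ s' : S, (M.tr s a0 s' : ℝ≥0∞) * ((w a0 : ℝ≥0∞) + val M w T (b - w a0) s') := by
            refine Finset.sum_le_sum fun s' _ => ?_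
            rw [h1, one_mul, ← hsdef]
            by_cases htr : M.tr s a0 s' = 0
            · simp [htr]
            · refine mul_le_mul_right ?_ _
              by_cases hsT : s' ∈ T
              · rw [if_pos hsT]; exact le_self_add
              · rw [if_neg hsT, (hih s' htr hsT).1, mul_one]
                exact add_le_add_right (hih s' htr hsT).2 _
        _ = Qv M w T b s a0 := sum_tr_Qv M w T hav b
        _ = val M w T b s := hQ

end Aux3
section Aux4
open Classical

set_option linter.unusedSectionVars false

variable {S A : Type} [Fintype S] [Fintype A]

lemma stateSeq_concat (M : MDP S A) (h : List (A × S)) (p : A × S) :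
    stateSeq M (h ++ [p]) = stateSeq M h ++ [p.2] := by
  simp [stateSeq]

lemma lastState_mem_stateSeq (M : MDP S A) (h : List (A × S)) :
    lastState M h ∈ stateSeq M h := by
  rcases List.eq_nil_or_concat h with rfl | ⟨t, p, rfl⟩
  · simp [stateSeq, lastState]
  · rw [List.concat_eq_append, lastState_concat, stateSeq_concat]
    simp

lemma LB (M : MDP S A) (w : A → ℕ) (hw : ∀ a, 1 ≤ w a) (T : Finset S) (ℓ₁ : ℕ)
    (τ : Strat S A) (hτ : IsStrategy M τ)
    (hwch : ∀ h : List (A × S), ∀ a s', probHist M τ h ≠ 0 →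
      (∀ x ∈ stateSeq M h, x ∉ T) → τ h a ≠ 0 → M.tr (lastState M h) a s' ≠ 0 →
      tsHist w h + w a ≤ ℓ₁) :
    ∀ n : ℕ, ∀ h : List (A × S), probHist M τ h ≠ 0 → (∀ x ∈ stateSeq M h, x ∉ T) →
      ℓ₁ + 1 - tsHist w h ≤ n →
      RP M T τ h = 1 ∧
        val M w T (ℓ₁ - tsHist w h) (lastState M h) ≤ RE M w T τ h := by
  intro n
  induction n with
  | zero =>
    intro h hph hT hn
    exfalso
    obtain ⟨⟨a, s'⟩, hta, hav, htr⟩ := exists_pos_step hτ h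
    have := hwch h a s' hph hT hta htr
    have := hw a
    omega
  | succ n ih =>
    intro h hph hT hn
    have hs : lastState M h ∉ T := hT _ (lastState_mem_stateSeq M h)
    have hts : tsHist w h ≤ ℓ₁ := by
      obtain ⟨⟨a, s'⟩, hta, hav, htr⟩ := exists_pos_step hτ h
      have := hwch h a s' hph hT hta htr
      omega
    -- facts about positive successors
    have hstep : ∀ a : A, ∀ s' : S, τ h a ≠ 0 → M.tr (lastState M h) a s' ≠ 0 → s' ∉ T →
        RP M T τ (h ++ [(a, s')]) = 1 ∧
          val M w T (ℓ₁ - tsHist w h - w a) s' ≤ RE M w T τ (h ++ [(a, s')]) := by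
      intro a s' hta htr hsT
      have hwa := hwch h a s' hph hT hta htr
      have hp2 : probHist M τ (h ++ [(a, s')]) ≠ 0 := by
        rw [probHist_concat]
        exact mul_ne_zero hph (mul_ne_zero hta htr)
      have hT2 : ∀ x ∈ stateSeq M (h ++ [(a, s')]), x ∉ T := by
        rw [stateSeq_concat]
        intro x hx
        rcases List.mem_append.mp hx with hx | hx
        · exact hT x hx
        · simp only [List.mem_singleton] at hx
          subst hx
          exact hsT
      have h1 := ih (h ++ [(a, s')]) hp2 hT2 (by
        rw [tsHist_concat]
        simp only
        have := hw a
        omega)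
      rw [lastState_concat, tsHist_concat] at h1
      simp only at h1
      have harith : ℓ₁ - (tsHist w h + w a) = ℓ₁ - tsHist w h - w a := by omega
      rw [harith] at h1
      exact h1
    have hcand : ∀ a : A, τ h a ≠ 0 → a ∈ cand M w (ℓ₁ - tsHist w h) (lastState M h) := by
      intro a hta
      have hav : a ∈ M.avail (lastState M h) := by
        by_contra hna
        exact hta ((hτ h).1 a hna)
      have hsum := M.tr_sum (lastState M h) a hav
      have hex : ∃ s', M.tr (lastState M h) a s' ≠ 0 := by
        by_contra hc
        push_neg at hc
        simp only [hc, Finset.sum_const_zero] at hsum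
        exact zero_ne_one hsum
      obtain ⟨s', hs'⟩ := hex
      have := hwch h a s' hph hT hta hs'
      rw [cand, Finset.mem_filter]
      exact ⟨hav, hw a, by omega⟩
    constructor
    · rw [RP_decomp]
      have hterm : ∀ p : A × S,
          (τ h p.1 : ℝ≥0∞) * (M.tr (lastState M h) p.1 p.2 : ℝ≥0∞) *
            (if p.2 ∈ T then 1 else RP M T τ (h ++ [p]))
          = (τ h p.1 : ℝ≥0∞) * (M.tr (lastState M h) p.1 p.2 : ℝ≥0∞) := by
        rintro ⟨a, s'⟩
        by_cases hta : τ h a = 0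
        · simp [hta]
        · by_cases htr : M.tr (lastState M h) a s' = 0
          · simp [htr]
          · by_cases hsT : s' ∈ T
            · rw [if_pos hsT, mul_one]
            · rw [if_neg hsT, (hstep a s' hta htr hsT).1, mul_one]
      rw [Finset.sum_congr rfl fun p _ => hterm p]
      exact sum_pair_one hτ h
    · rw [RE_decomp]
      calc val M w T (ℓ₁ - tsHist w h) (lastState M h)
          = (∑ a : A, (τ h a : ℝ≥0∞)) * val M w T (ℓ₁ - tsHist w h) (lastState M h) := by
            rw [strat_sum_ennreal hτ, one_mul]
        _ = ∑ a : A, (τ h a : ℝ≥0∞) * val M w T (ℓ₁ - tsHist w h) (lastState M h) :=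
            Finset.sum_mul _ _ _
        _ ≤ ∑ a : A, (τ h a : ℝ≥0∞) * (∑ s' : S, (M.tr (lastState M h) a s' : ℝ≥0∞) *
              ((w a : ℝ≥0∞) + val M w T (ℓ₁ - tsHist w h - w a) s')) := by
            refine Finset.sum_le_sum fun a _ => ?_
            by_cases hta : τ h a = 0
            · simp [hta]
            · refine mul_le_mul_right ?_ _
              have hc := hcand a hta
              have hav : a ∈ M.avail (lastState M h) := by
                rw [cand, Finset.mem_filter] at hc
                exact hc.1
              rw [sum_tr_Qv M w T hav]
              exact val_le_Qv hs hc
        _ = ∑ p : A × S, (τ h p.1 : ℝ≥0∞) * ((M.tr (lastState M h) p.1 p.2 : ℝ≥0∞) *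
              ((w p.1 : ℝ≥0∞) + val M w T (ℓ₁ - tsHist w h - w p.1) p.2)) := by
            rw [Fintype.sum_prod_type]
            exact Finset.sum_congr rfl fun a _ => (Finset.mul_sum _ _ _)
        _ ≤ ∑ p : A × S, (τ h p.1 : ℝ≥0∞) * (M.tr (lastState M h) p.1 p.2 : ℝ≥0∞) *
              (if p.2 ∈ T then (w p.1 : ℝ≥0∞)
               else (w p.1 : ℝ≥0∞) * RP M T τ (h ++ [p]) + RE M w T τ (h ++ [p])) := by
            refine Finset.sum_le_sum fun p _ => ?_
            obtain ⟨a, s'⟩ := p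
            rw [mul_assoc]
            by_cases hta : τ h a = 0
            · simp [hta]
            · refine mul_le_mul_right ?_ _
              by_cases htr : M.tr (lastState M h) a s' = 0
              · simp [htr]
              · refine mul_le_mul_right ?_ _
                by_cases hsT : s' ∈ T
                · rw [if_pos hsT]
                  simp only
                  rw [val_of_mem hsT, add_zero]
                · rw [if_neg hsT, (hstep a s' hta htr hsT).1, mul_one]
                  exact add_le_add_right (hstep a s' hta htr hsT).2 _

end Aux4
section Aux5
open Classical

set_option linter.unusedSectionVars false

variable {S A : Type} [Fintype S] [Fintype A]

lemma hits_nil (M : MDP S A) (T : Finset S) : Hits M T [] ↔ M.init ∈ T := by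
  simp [Hits, stateSeq]

lemma hits_concat (M : MDP S A) (T : Finset S) (h : List (A × S)) (p : A × S) :
    Hits M T (h ++ [p]) ↔ p.2 ∈ T ∧ ∀ x ∈ stateSeq M h, x ∉ T := by
  have hseq : stateSeq M (h ++ [p]) = stateSeq M h ++ [p.2] := stateSeq_concat M h p
  have hdrop : (stateSeq M (h ++ [p])).dropLast = stateSeq M h := by
    rw [hseq]
    exact List.dropLast_concat
  have hlast : (stateSeq M (h ++ [p])).getLast (by simp [stateSeq]) = p.2 := by
    rw [List.getLast_congr _ (by simp) hseq]
    exact List.getLast_append_singleton _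
  unfold Hits
  rw [hdrop, hlast]

lemma rhit_concat (T : Finset S) :
    ∀ (h : List (A × S)) (p : A × S),
      RHit T (h ++ [p]) ↔ p.2 ∈ T ∧ ∀ q ∈ h, q.2 ∉ T := by
  intro h
  induction h with
  | nil =>
    intro p
    obtain ⟨a, s⟩ := p
    simp [RHit]
  | cons q t ih =>
    intro p
    obtain ⟨a, s⟩ := q
    rw [List.cons_append]
    by_cases hs : s ∈ T
    · rw [RHit_cons_mem hs]
      simp [hs]
    · rw [RHit_cons_not_mem hs, ih p]
      simp [hs]

lemma stateSeq_not_mem_iff (M : MDP S A) (T : Finset S) (h : List (A × S)) :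
    (∀ x ∈ stateSeq M h, x ∉ T) ↔ (M.init ∉ T ∧ ∀ q ∈ h, q.2 ∉ T) := by
  simp only [stateSeq, List.mem_cons, List.mem_map]
  aesop

lemma hits_iff_rhit (M : MDP S A) (T : Finset S) (hi : M.init ∉ T) (h : List (A × S)) :
    Hits M T h ↔ RHit T h := by
  rcases List.eq_nil_or_concat h with rfl | ⟨t, p, rfl⟩
  · rw [hits_nil]
    simp [hi, RHit_nil]
  · rw [List.concat_eq_append, hits_concat, rhit_concat, stateSeq_not_mem_iff]
    tauto

lemma hits_iff_nil (M : MDP S A) (T : Finset S) (hi : M.init ∈ T) (h : List (A × S)) :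
    Hits M T h ↔ h = [] := by
  rcases List.eq_nil_or_concat h with rfl | ⟨t, p, rfl⟩
  · rw [hits_nil]
    simp [hi]
  · rw [List.concat_eq_append, hits_concat, stateSeq_not_mem_iff]
    constructor
    · rintro ⟨-, hni, -⟩
      exact absurd hi hni
    · intro hcon
      exact absurd hcon (by simp)

lemma tsum_hits_eq (M : MDP S A) (T : Finset S) (hi : M.init ∉ T)
    (f : List (A × S) → ℝ≥0∞) :
    ∑' h : {h : List (A × S) // Hits M T h}, f h.1
      = ∑' h : List (A × S), if RHit T h then f h else 0 := by
  have h1 : ∑' (x : ↥{l : List (A × S) | Hits M T l}), f ↑x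
      = ∑' x : List (A × S), Set.indicator {l | Hits M T l} f x :=
    tsum_subtype {l : List (A × S) | Hits M T l} f
  refine h1.trans (tsum_congr fun h => ?_)
  rw [Set.indicator_apply]
  exact if_congr (by rw [Set.mem_setOf_eq, hits_iff_rhit M T hi h]) rfl rfl

lemma tsum_hits_eq1 (M : MDP S A) (w : A → ℕ) (T : Finset S) (τ : Strat S A)
    (hi : M.init ∉ T) :
    ∑' h : {h : List (A × S) // Hits M T h},
        (probHist M τ h.1 : ℝ≥0∞) * (tsHist w h.1 : ℝ≥0∞) = RE M w T τ [] :=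
  tsum_hits_eq M T hi (fun h => (probHist M τ h : ℝ≥0∞) * (tsHist w h : ℝ≥0∞))

lemma tsum_hits_eq2 (M : MDP S A) (T : Finset S) (τ : Strat S A)
    (hi : M.init ∉ T) :
    ∑' h : {h : List (A × S) // Hits M T h},
        (probHist M τ h.1 : ℝ≥0∞) = RP M T τ [] :=
  tsum_hits_eq M T hi (fun h => (probHist M τ h : ℝ≥0∞))

lemma expTS_eq (M : MDP S A) (w : A → ℕ) (T : Finset S) (τ : Strat S A)
    (hi : M.init ∉ T) :
    expTS M τ w T = RE M w T τ [] + (1 - RP M T τ []) * ⊤ := by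
  rw [expTS, probNoReach, tsum_hits_eq1 M w T τ hi, tsum_hits_eq2 M T τ hi]

lemma expTS_of_mem (M : MDP S A) (w : A → ℕ) (T : Finset S) (τ : Strat S A)
    (hi : M.init ∈ T) :
    expTS M τ w T = 0 := by
  have hnil : Hits M T [] := (hits_nil M T).mpr hi
  have hz : ∀ (b : {h : List (A × S) // Hits M T h}),
      b ≠ ⟨[], hnil⟩ → False := by
    intro b hb
    exact hb (Subtype.ext ((hits_iff_nil M T hi b.1).mp b.2))
  have e1 : ∑' h : {h : List (A × S) // Hits M T h},
      (probHist M τ h.1 : ℝ≥0∞) * (tsHist w h.1 : ℝ≥0∞)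
      = (probHist M τ [] : ℝ≥0∞) * (tsHist w ([] : List (A × S)) : ℝ≥0∞) :=
    tsum_eq_single ⟨[], hnil⟩ (fun b hb => absurd (hz b hb) not_false)
  have e2 : ∑' h : {h : List (A × S) // Hits M T h},
      (probHist M τ h.1 : ℝ≥0∞) = (probHist M τ [] : ℝ≥0∞) :=
    tsum_eq_single ⟨[], hnil⟩ (fun b hb => absurd (hz b hb) not_false)
  rw [expTS, probNoReach, e1, e2]
  have h1 : (probHist M τ [] : ℝ≥0∞) = 1 := by
    rw [probHist, probFrom_nil]
    rfl
  rw [h1]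
  simp [tsHist_nil]

end Aux5
section Aux6
open Classical

set_option linter.unusedSectionVars false

variable {S A : Type} [Fintype S] [Fintype A]

lemma lastState_ofFn (M : MDP S A) (ρ : ℕ → A × S) (n : ℕ) :
    lastState M (List.ofFn fun i : Fin n => ρ i) = stateAt M ρ n := by
  cases n with
  | zero => rfl
  | succ m =>
    rw [List.ofFn_succ', List.concat_eq_append, lastState_concat]
    rfl

lemma tsHist_ofFn (w : A → ℕ) (ρ : ℕ → A × S) (n : ℕ) :
    tsHist w (List.ofFn fun i : Fin n => ρ i) = ∑ i ∈ Finset.range n, w (ρ i).1 := by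
  induction n with
  | zero => rfl
  | succ m ih =>
    rw [List.ofFn_succ', List.concat_eq_append, tsHist_concat, Finset.sum_range_succ]
    have hfun : (fun i : Fin m => ρ ((Fin.castSucc i) : ℕ)) = fun i : Fin m => ρ i := by
      funext i
      rw [Fin.coe_castSucc]
    rw [hfun, ih, Fin.val_last]

lemma pstrat_wc (M : MDP S A) (w : A → ℕ) (hw : ∀ a, 1 ≤ w a) (T : Finset S) (ℓ₁ : ℕ)
    (hval : val M w T ℓ₁ M.init ≠ ⊤) :
    ∀ ρ : ℕ → A × S, Consistent M (pstrat M w T ℓ₁) ρ → tsRun M w T ρ ≤ (ℓ₁ : ℝ≥0∞) := by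
  intro ρ hcons
  by_cases hinit : M.init ∈ T
  · have hex : ∃ n, stateAt M ρ n ∈ T := ⟨0, hinit⟩
    rw [tsRun, dif_pos hex, (Nat.find_eq_zero hex).mpr hinit]
    simp
  · have claim : ∀ n : ℕ, (∀ m, m < n → stateAt M ρ m ∉ T) →
        (∑ i ∈ Finset.range n, w (ρ i).1) ≤ ℓ₁ ∧
          val M w T (ℓ₁ - ∑ i ∈ Finset.range n, w (ρ i).1) (stateAt M ρ n) ≠ ⊤ := by
      intro n
      induction n with
      | zero => exact fun _ => ⟨Nat.zero_le _, by simpa [stateAt] using hval⟩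
      | succ m ih =>
        intro hm
        obtain ⟨hc, hv⟩ := ih (fun k hk => hm k (by omega))
        have hsm : stateAt M ρ m ∉ T := hm m (by omega)
        obtain ⟨hav, hpos, htr⟩ := hcons m
        have heq : (ρ m).1
            = act M w T (ℓ₁ - ∑ i ∈ Finset.range m, w (ρ i).1) (stateAt M ρ m) := by
          by_contra hne
          have hzero : pstrat M w T ℓ₁ (List.ofFn fun i : Fin m => ρ i) (ρ m).1 = 0 := by
            simp only [pstrat]
            rw [lastState_ofFn, tsHist_ofFn, if_neg hne]
          rw [hzero] at hpos
          exact lt_irrefl 0 hpos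
        obtain ⟨hacand, hQ⟩ := act_spec hsm hv
        rw [← heq] at hacand hQ
        rw [cand, Finset.mem_filter] at hacand
        have hwb := hacand.2.2
        constructor
        · rw [Finset.sum_range_succ]
          omega
        · have harith : ℓ₁ - ∑ i ∈ Finset.range (m + 1), w (ρ i).1
              = (ℓ₁ - ∑ i ∈ Finset.range m, w (ρ i).1) - w (ρ m).1 := by
            rw [Finset.sum_range_succ]
            omega
          rw [harith]
          have hst : stateAt M ρ (m + 1) = (ρ m).2 := rfl
          rw [hst]
          exact val_succ_ne_top (by rw [hQ]; exact hv) htr.ne'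
    have hex : ∃ n, stateAt M ρ n ∈ T := by
      by_contra hc
      push_neg at hc
      have hle := (claim (ℓ₁ + 1) (fun m _ => hc m)).1
      have hge : ℓ₁ + 1 ≤ ∑ i ∈ Finset.range (ℓ₁ + 1), w (ρ i).1 := by
        calc ℓ₁ + 1 = ∑ _i ∈ Finset.range (ℓ₁ + 1), 1 := by simp
          _ ≤ _ := Finset.sum_le_sum fun i _ => hw _
      omega
    rw [tsRun, dif_pos hex]
    exact Nat.cast_le.mpr (claim (Nat.find hex) (fun m hm => Nat.find_min hex hm)).1

end Aux6
section Aux7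
open Classical

set_option linter.unusedSectionVars false

variable {S A : Type} [Fintype S] [Fintype A]

lemma hist_steps {M : MDP S A} {τ : Strat S A} :
    ∀ h : List (A × S), probHist M τ h ≠ 0 → ∀ i, ∀ hi : i < h.length,
      τ (h.take i) ((h[i]'hi).1) ≠ 0 ∧
        M.tr (lastState M (h.take i)) ((h[i]'hi).1) ((h[i]'hi).2) ≠ 0 := by
  intro h
  induction h using List.reverseRecOn with
  | nil =>
    intro _ i hi
    simp at hi
  | append_singleton t p ih =>
    intro hp i hi
    rw [probHist_concat, mul_ne_zero_iff, mul_ne_zero_iff] at hp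
    rcases Nat.lt_or_ge i t.length with hlt | hge
    · have e1 : List.take i (t ++ [p]) = List.take i t :=
        List.take_append_of_le_length (le_of_lt hlt)
      have e2 : (t ++ [p])[i]'hi = t[i]'hlt := List.getElem_append_left hlt
      rw [e1, e2]
      exact ih hp.1 i hlt
    · have hieq : i = t.length := by
        simp only [List.length_append, List.length_singleton] at hi
        omega
      subst hieq
      have e1 : List.take t.length (t ++ [p]) = t := List.take_left
      have e2 : (t ++ [p])[t.length]'hi = p := by
        rw [List.getElem_append_right le_rfl]
        simp
      rw [e1, e2]
      exact hp.2

lemma lastState_take_mem (M : MDP S A) (h : List (A × S)) (m : ℕ) :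
    lastState M (h.take m) ∈ stateSeq M h := by
  rcases List.eq_nil_or_concat (h.take m) with he | ⟨t, p, he⟩
  · rw [he]
    exact List.mem_cons_self
  · rw [he, List.concat_eq_append, lastState_concat]
    have hp : p ∈ h.take m := by
      rw [he]
      simp
    have hph : p ∈ h := List.take_subset m h hp
    exact List.mem_cons_of_mem _ (List.mem_map_of_mem (f := Prod.snd) hph)

lemma wch_of_runs (M : MDP S A) (w : A → ℕ) (T : Finset S) (ℓ₁ : ℕ)
    (τ : Strat S A) (hτ : IsStrategy M τ)
    (hrun : ∀ ρ : ℕ → A × S, Consistent M τ ρ → tsRun M w T ρ ≤ (ℓ₁ : ℝ≥0∞)) :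
    ∀ h : List (A × S), ∀ a : A, ∀ s' : S, probHist M τ h ≠ 0 →
      (∀ x ∈ stateSeq M h, x ∉ T) → τ h a ≠ 0 → M.tr (lastState M h) a s' ≠ 0 →
      tsHist w h + w a ≤ ℓ₁ := by
  intro h a s' hph hT hta htr
  set h₀ : List (A × S) := h ++ [(a, s')] with hh₀
  have hlen₀ : h₀.length = h.length + 1 := by simp [hh₀]
  have hp0 : probHist M τ h₀ ≠ 0 := by
    rw [hh₀, probHist_concat]
    exact mul_ne_zero hph (mul_ne_zero hta htr)
  set step0 : List (A × S) → A × S := fun g => (exists_pos_step hτ g).choose with hstep0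
  set step : List (A × S) → A × S :=
    fun g => if g.length < h₀.length then h₀.getD g.length (step0 g) else step0 g with hstepdef
  set L : ℕ → List (A × S) := fun n => Nat.rec [] (fun _ l => l ++ [step l]) n with hLdef
  set ρ : ℕ → A × S := fun n => step (L n) with hρdef
  have hLs : ∀ n, L (n + 1) = L n ++ [ρ n] := fun n => rfl
  have hlen : ∀ n, (L n).length = n := by
    intro n
    induction n with
    | zero => rfl
    | succ m ih => rw [hLs, List.length_append, ih]; rfl
  have hofFn : ∀ n, (List.ofFn fun i : Fin n => ρ i) = L n := by
    intro n
    induction n with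
    | zero => rfl
    | succ m ih =>
      rw [List.ofFn_succ', List.concat_eq_append]
      have hfun : (fun i : Fin m => ρ ((Fin.castSucc i) : ℕ)) = fun i : Fin m => ρ i := by
        funext i
        rw [Fin.coe_castSucc]
      rw [hfun, ih, Fin.val_last, ← hLs]
  have hstate : ∀ n, stateAt M ρ n = lastState M (L n) := by
    intro n
    cases n with
    | zero => rfl
    | succ m => rw [hLs, lastState_concat]; rfl
  have hLtake : ∀ n, n ≤ h₀.length → L n = h₀.take n := by
    intro n
    induction n with
    | zero => intro _; rfl
    | succ m ih =>
      intro hn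
      have hlt : m < h₀.length := by omega
      have hsteptake : step (h₀.take m) = h₀[m]'hlt := by
        rw [hstepdef]
        simp only
        have hlentake : (h₀.take m).length = m := by
          rw [List.length_take]
          omega
        rw [hlentake, if_pos hlt, List.getD_eq_getElem]
      show L m ++ [step (L m)] = h₀.take (m + 1)
      rw [ih (by omega), hsteptake, List.take_succ, List.getElem?_eq_getElem hlt]
      rfl
  have hρi : ∀ i, ∀ hi : i < h₀.length, ρ i = h₀[i]'hi := by
    intro i hi
    show step (L i) = _
    rw [hLtake i (le_of_lt hi)]
    rw [hstepdef]
    simp only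
    have hlentake : (h₀.take i).length = i := by
      rw [List.length_take]
      omega
    rw [hlentake, if_pos hi, List.getD_eq_getElem]
  have hcons : Consistent M τ ρ := by
    intro n
    rw [hofFn n, hstate n]
    rcases Nat.lt_or_ge n h₀.length with hlt | hge
    · rw [hLtake n (le_of_lt hlt), hρi n hlt]
      have hs := hist_steps h₀ hp0 n hlt
      refine ⟨?_, pos_iff_ne_zero.mpr hs.1, pos_iff_ne_zero.mpr hs.2⟩
      by_contra hna
      exact hs.1 ((hτ (h₀.take n)).1 _ hna)
    · have hρn : ρ n = step0 (L n) := by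
        show step (L n) = step0 (L n)
        rw [hstepdef]
        simp only
        rw [hlen n, if_neg (by omega)]
      rw [hρn]
      have spec := (exists_pos_step hτ (L n)).choose_spec
      exact ⟨spec.2.1, pos_iff_ne_zero.mpr spec.1, pos_iff_ne_zero.mpr spec.2.2⟩
  have htsr := hrun ρ hcons
  have hnot : ∀ m, m < h₀.length → stateAt M ρ m ∉ T := by
    intro m hm
    rw [hstate m, hLtake m (le_of_lt hm)]
    have hmle : m ≤ h.length := by omega
    rw [hh₀, List.take_append_of_le_length hmle]
    exact hT _ (lastState_take_mem M h m)
  have hex : ∃ n, stateAt M ρ n ∈ T := by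
    by_contra hc
    rw [tsRun, dif_neg hc] at htsr
    exact absurd htsr (by simp)
  have hfind : h₀.length ≤ Nat.find hex := by
    by_contra hcc
    push_neg at hcc
    exact hnot _ hcc (Nat.find_spec hex)
  have hsum : tsHist w h₀ = ∑ i ∈ Finset.range h₀.length, w (ρ i).1 := by
    rw [← tsHist_ofFn w ρ h₀.length, hofFn, hLtake _ le_rfl, List.take_length]
  rw [tsRun, dif_pos hex] at htsr
  have hnat : ∑ i ∈ Finset.range (Nat.find hex), w (ρ i).1 ≤ ℓ₁ := by
    exact_mod_cast htsr
  have hmono : ∑ i ∈ Finset.range h₀.length, w (ρ i).1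
      ≤ ∑ i ∈ Finset.range (Nat.find hex), w (ρ i).1 :=
    Finset.sum_le_sum_of_subset (Finset.range_subset_range.mpr hfind)
  have hfin : tsHist w h₀ ≤ ℓ₁ := by
    rw [hsum]
    omega
  rw [hh₀, tsHist_concat] at hfin
  simpa using hfin

end Aux7
/-- beyond worst-case synthesis. If some strategy simultaneously
guarantees the worst-case bound `ℓ₁` on every consistent run and expectation at most
`ℓ₂`, then some pure strategy whose choice only depends on the last state of the
history together with the accumulated weight (a pure finite-memory strategy, since the
accumulated weight stays at most `ℓ₁` along consistent runs) does as well. -/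
theorem stmt3 {S A : Type} [Fintype S] [Fintype A] (M : MDP S A)
    (w : A → ℕ) (hw : ∀ a, 1 ≤ w a) (T : Finset S) (ℓ₁ ℓ₂ : ℕ)
    (hex : ∃ σ : Strat S A, IsStrategy M σ ∧
      (∀ ρ : ℕ → A × S, Consistent M σ ρ → tsRun M w T ρ ≤ (ℓ₁ : ℝ≥0∞)) ∧
      expTS M σ w T ≤ (ℓ₂ : ℝ≥0∞)) :
    ∃ σ' : Strat S A, IsStrategy M σ' ∧ IsPure σ' ∧
      (∀ h h' : List (A × S), lastState M h = lastState M h' →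
        tsHist w h = tsHist w h' → σ' h = σ' h') ∧
      (∀ ρ : ℕ → A × S, Consistent M σ' ρ → tsRun M w T ρ ≤ (ℓ₁ : ℝ≥0∞)) ∧
      expTS M σ' w T ≤ (ℓ₂ : ℝ≥0∞) := by
  classical
  obtain ⟨σ, hσ, hσwc, hσexp⟩ := hex
  refine ⟨pstrat M w T ℓ₁, isStrategy_pstrat M w T ℓ₁, ?_, ?_, ?_⟩
  · intro h
    exact ⟨act M w T (ℓ₁ - tsHist w h) (lastState M h), by simp [pstrat]⟩
  · intro h h' he hts
    funext a
    simp only [pstrat]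
    rw [he, hts]
  by_cases hi : M.init ∈ T
  · constructor
    · intro ρ _
      have hex0 : ∃ n, stateAt M ρ n ∈ T := ⟨0, hi⟩
      rw [tsRun, dif_pos hex0, (Nat.find_eq_zero hex0).mpr hi]
      simp
    · rw [expTS_of_mem M w T _ hi]
      exact zero_le
  · have hwch := wch_of_runs M w T ℓ₁ σ hσ hσwc
    have hLB := LB M w hw T ℓ₁ σ hσ (fun h a s' => hwch h a s') (ℓ₁ + 1) []
      (by rw [probHist, probFrom_nil]; exact one_ne_zero)
      (by
        intro x hx
        simp only [stateSeq, List.map_nil, List.mem_singleton] at hx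
        subst hx
        exact hi)
      (by simp [tsHist_nil])
    obtain ⟨hRP1, hvle⟩ := hLB
    simp only [tsHist_nil, lastState_nil, Nat.sub_zero] at hvle
    have hexp := hσexp
    rw [expTS_eq M w T σ hi] at hexp
    have hREle : RE M w T σ [] ≤ (ℓ₂ : ℝ≥0∞) := le_trans le_self_add hexp
    have hvalle : val M w T ℓ₁ M.init ≤ (ℓ₂ : ℝ≥0∞) := le_trans hvle hREle
    have hvalne : val M w T ℓ₁ M.init ≠ ⊤ :=
      ne_top_of_le_ne_top (ENNReal.natCast_ne_top ℓ₂) hvalle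
    constructor
    · exact pstrat_wc M w hw T ℓ₁ hvalne
    · have hUB := UB M w hw T ℓ₁ (ℓ₁ + 1) []
        (by rw [lastState_nil]; exact hi)
        (by simp [tsHist_nil])
        (by simpa [tsHist_nil, lastState_nil] using hvalne)
        (by simp [tsHist_nil])
      obtain ⟨hRP', hRE'⟩ := hUB
      simp only [tsHist_nil, lastState_nil, Nat.sub_zero] at hRE'
      rw [expTS_eq M w T _ hi, hRP', tsub_self, zero_mul, add_zero]
      exact le_trans hRE' hvalle
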